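/- Let g be a metric Lie algebra with no non-zero abelian orthogonal factor. If J₁, J₂: g → g are two orthogonal bi-invariant complex structures, then J₁ and J₂ commute. -/

import Mathlib

open scoped RealInnerProductSpace TensorProduct

/-- A metric Lie algebra: a real Lie algebra equipped with a positive definite inner product. -/
class MetricLieAlgebra (g : Type*) [LieRing g] [LieAlgebra ℝ g] [Inner ℝ g] : Prop where
  inner_add_left : ∀ x y z : g, ⟪x + y, z⟫ = ⟪x, z⟫ + ⟪y, z⟫
  inner_smul_left : ∀ (r : ℝ) (x y : g), ⟪r • x, y⟫ = r * ⟪x, y⟫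
  inner_symm : ∀ x y : g, ⟪x, y⟫ = ⟪y, x⟫
  inner_self_pos : ∀ x : g, x ≠ 0 → 0 < ⟪x, x⟫

variable {g : Type*} [LieRing g] [LieAlgebra ℝ g] [Inner ℝ g]

/-- An orthogonal factor: an ideal admitting a complementary ideal orthogonal to it. -/
def IsOrthogonalFactor (h : LieIdeal ℝ g) : Prop :=
  ∃ h' : LieIdeal ℝ g, (∀ x ∈ h, ∀ y ∈ h', ⟪x, y⟫ = 0) ∧ h ⊔ h' = ⊤ ∧ h ⊓ h' = ⊥

/-- An orthogonal projection of a metric Lie algebra. -/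
def IsOrthogonalProjection (p : g →ₗ[ℝ] g) : Prop :=
  (∀ x y : g, p ⁅x, y⁆ = ⁅p x, p y⁆) ∧ p ∘ₗ p = p ∧
  (∀ x y : g, p ⁅x, y⁆ = ⁅p x, y⁆) ∧ ∀ x y : g, ⟪p x, y⟫ = ⟪x, p y⟫

/-- An orthogonal bi-invariant complex structure. -/
def IsOrthBiinvCplxStruct (J : g →ₗ[ℝ] g) : Prop :=
  (∀ x : g, J (J x) = -x) ∧ (∀ x y : g, J ⁅x, y⁆ = ⁅J x, y⁆) ∧
    ∀ x y : g, ⟪J x, J y⟫ = ⟪x, y⟫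

/-- Two orthogonal bi-invariant complex structures on a metric Lie algebra with no
non-zero abelian factor commute. -/
theorem stmt7 (g : Type*) [LieRing g] [LieAlgebra ℝ g] [Inner ℝ g]
    [MetricLieAlgebra g] [Module.Finite ℝ g]
    (hZ : ∀ x : g, (∀ y : g, ⁅x, y⁆ = 0) →
      x ∈ ⁅(⊤ : LieIdeal ℝ g), (⊤ : LieIdeal ℝ g)⁆)
    (J₁ J₂ : g →ₗ[ℝ] g)
    (hJ₁ : IsOrthBiinvCplxStruct J₁) (hJ₂ : IsOrthBiinvCplxStruct J₂) :
    J₁ ∘ₗ J₂ = J₂ ∘ₗ J₁ := by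
  obtain ⟨h1sq, h1b, h1o⟩ := hJ₁
  obtain ⟨h2sq, h2b, h2o⟩ := hJ₂
  -- basic inner product facts
  have inner_neg_right : ∀ x y : g, ⟪x, -y⟫ = -⟪x, y⟫ := by
    intro x y
    rw [MetricLieAlgebra.inner_symm x (-y), ← neg_one_smul ℝ y,
      MetricLieAlgebra.inner_smul_left, MetricLieAlgebra.inner_symm]
    ring
  have inner_zero_right : ∀ x : g, ⟪x, (0 : g)⟫ = 0 := by
    intro x
    rw [MetricLieAlgebra.inner_symm x 0, ← zero_smul ℝ (0 : g),
      MetricLieAlgebra.inner_smul_left]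
    ring
  have inner_sub_left : ∀ x y z : g, ⟪x - y, z⟫ = ⟪x, z⟫ - ⟪y, z⟫ := by
    intro x y z
    rw [sub_eq_add_neg, MetricLieAlgebra.inner_add_left, ← neg_one_smul ℝ y,
      MetricLieAlgebra.inner_smul_left]
    ring
  have inner_sub_right : ∀ x y z : g, ⟪x, y - z⟫ = ⟪x, y⟫ - ⟪x, z⟫ := by
    intro x y z
    rw [MetricLieAlgebra.inner_symm x (y - z), inner_sub_left,
      MetricLieAlgebra.inner_symm y x, MetricLieAlgebra.inner_symm z x]
  -- skew-symmetry of J₁, J₂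
  have skew : ∀ (J : g →ₗ[ℝ] g), (∀ x : g, J (J x) = -x) →
      (∀ x y : g, ⟪J x, J y⟫ = ⟪x, y⟫) → ∀ x y : g, ⟪J x, y⟫ = -⟪x, J y⟫ := by
    intro J hsq ho x y
    have hy : y = J (-(J y)) := by rw [map_neg, hsq, neg_neg]
    calc ⟪J x, y⟫ = ⟪J x, J (-(J y))⟫ := by rw [← hy]
      _ = ⟪x, -(J y)⟫ := ho _ _
      _ = -⟪x, J y⟫ := inner_neg_right _ _
  have skew1 := skew J₁ h1sq h1o
  have skew2 := skew J₂ h2sq h2o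
  -- bi-invariance in the second slot
  have h1b' : ∀ x y : g, J₁ ⁅x, y⁆ = ⁅x, J₁ y⁆ := by
    intro x y
    calc J₁ ⁅x, y⁆ = J₁ (-⁅y, x⁆) := by rw [lie_skew]
      _ = -⁅J₁ y, x⁆ := by rw [map_neg, h1b]
      _ = ⁅x, J₁ y⁆ := lie_skew _ _
  have h2b' : ∀ x y : g, J₂ ⁅x, y⁆ = ⁅x, J₂ y⁆ := by
    intro x y
    calc J₂ ⁅x, y⁆ = J₂ (-⁅y, x⁆) := by rw [lie_skew]
      _ = -⁅J₂ y, x⁆ := by rw [map_neg, h2b]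
      _ = ⁅x, J₂ y⁆ := lie_skew _ _
  set K : g →ₗ[ℝ] g := J₁ ∘ₗ J₂ - J₂ ∘ₗ J₁ with hK
  have hKapp : ∀ x : g, K x = J₁ (J₂ x) - J₂ (J₁ x) := fun x => rfl
  have comm_br : ∀ x y : g, J₁ (J₂ ⁅x, y⁆) = J₂ (J₁ ⁅x, y⁆) := by
    intro x y
    rw [h2b', h1b, h1b, h2b']
  -- K vanishes on brackets
  have Kbr : ∀ x y : g, K ⁅x, y⁆ = 0 := by
    intro x y
    rw [hKapp, comm_br, sub_self]
  -- K x is central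
  have Kcent : ∀ x y : g, ⁅K x, y⁆ = 0 := by
    intro x y
    rw [hKapp, sub_lie, ← h1b, ← h2b, ← h2b, ← h1b, comm_br, sub_self]
  -- K vanishes on the derived ideal
  have Kder : ∀ b : g, b ∈ ⁅(⊤ : LieIdeal ℝ g), (⊤ : LieIdeal ℝ g)⁆ → K b = 0 := by
    intro b hb
    have key : ((⁅(⊤ : LieIdeal ℝ g), (⊤ : LieIdeal ℝ g)⁆ : LieSubmodule ℝ g g) :
        Submodule ℝ g) ≤ LinearMap.ker K := by
      rw [LieIdeal.toLieSubalgebra_toSubmodule, LieSubmodule.lieIdeal_oper_eq_linear_span']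
      refine Submodule.span_le.mpr ?_
      rintro m ⟨x, -, n, -, rfl⟩
      exact Kbr x n
    exact key hb
  -- K is skew-adjoint
  have Kskew : ∀ x y : g, ⟪K x, y⟫ = -⟪x, K y⟫ := by
    intro x y
    have e1 : ⟪J₁ (J₂ x), y⟫ = ⟪x, J₂ (J₁ y)⟫ := by
      rw [skew1, skew2, neg_neg]
    have e2 : ⟪J₂ (J₁ x), y⟫ = ⟪x, J₁ (J₂ y)⟫ := by
      rw [skew2, skew1, neg_neg]
    rw [hKapp, inner_sub_left, e1, e2, hKapp, inner_sub_right]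
    ring
  -- conclude
  ext x
  have hcent := hZ (K x) (Kcent x)
  have hKKx : K (K x) = 0 := Kder (K x) hcent
  have hz : ⟪K x, K x⟫ = 0 := by
    rw [Kskew, hKKx, inner_zero_right, neg_zero]
  have hKx : K x = 0 := by
    by_contra h
    exact (MetricLieAlgebra.inner_self_pos (K x) h).ne' hz
  have := sub_eq_zero.mp (hKapp x ▸ hKx)
  simpa using this
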